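/- Let k ≥ 1, θ_k ∈ (0, 1/k), and let y_k solve (Γ_k(-ln y_k))' = k!(1 - 1/(kθ_k)) - Γ_{k+1}(-ln y_k) on (0,1) with y_k(0)=1 and y_k(t)→0 as t→1⁻. Then θ_k satisfies the integral equation ∫_0^1 (-ln y)^{k-1} / ( k!/(kθ_k) - k! + Γ_{k+1}(-ln y) ) dy = 1. -/

import Mathlib

/-- The upper incomplete gamma function `Γ_r(x) = ∫_x^∞ t^{r-1} e^{-t} dt`. -/
noncomputable def uGamma (r : ℕ) (x : ℝ) : ℝ := ∫ t in Set.Ioi x, t ^ (r - 1) * Real.exp (-t)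

open MeasureTheory Set Filter Topology

lemma integrableOn_pow_mul_exp_neg (n : ℕ) (x : ℝ) :
    IntegrableOn (fun t : ℝ => t ^ n * Real.exp (-t)) (Set.Ioi x) := by
  apply integrable_of_isBigO_exp_neg (b := 1/2) (by norm_num)
    (Continuous.continuousOn (by continuity))
  have h2 : Tendsto (fun t : ℝ => t / 2) atTop atTop :=
    tendsto_id.atTop_div_const (by norm_num)
  have h := (Real.tendsto_pow_mul_exp_neg_atTop_nhds_zero n).comp h2
  have h3 : Tendsto (fun t : ℝ => (2:ℝ)^n * ((t/2)^n * Real.exp (-(t/2)))) atTop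
      (𝓝 ((2:ℝ)^n * 0)) := h.const_mul _
  rw [mul_zero] at h3
  have hlo : (fun t : ℝ => t ^ n * Real.exp (-t)) =o[atTop]
      fun t : ℝ => Real.exp (-(1/2) * t) := by
    rw [Asymptotics.isLittleO_iff_tendsto (fun t ht => absurd ht (Real.exp_ne_zero _))]
    refine h3.congr fun t => ?_
    rw [mul_div_assoc, ← Real.exp_sub, show -t - -(1/2) * t = -(t/2) by ring, ← mul_assoc,
      show (2:ℝ)^n * (t/2)^n = t^n by rw [← mul_pow]; congr 1; ring]
  exact hlo.isBigO

lemma uGamma_hasDerivAt (r : ℕ) (x : ℝ) :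
    HasDerivAt (uGamma r) (-(x ^ (r-1) * Real.exp (-x))) x := by
  have hcont : Continuous (fun t : ℝ => t ^ (r-1) * Real.exp (-t)) := by continuity
  have key : ∀ a b : ℝ, a ≤ b →
      uGamma r a = (∫ t in a..b, t ^ (r-1) * Real.exp (-t)) + uGamma r b := by
    intro a b hab
    rw [intervalIntegral.integral_of_le hab]
    unfold uGamma
    rw [← MeasureTheory.setIntegral_union (Set.Ioc_disjoint_Ioi le_rfl) measurableSet_Ioi
        ((integrableOn_pow_mul_exp_neg (r-1) a).mono_set Set.Ioc_subset_Ioi_self)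
        (integrableOn_pow_mul_exp_neg (r-1) b),
      Set.Ioc_union_Ioi_eq_Ioi hab]
  have keyall : uGamma r =
      fun y => uGamma r 0 - ∫ t in (0:ℝ)..y, t ^ (r-1) * Real.exp (-t) := by
    funext y
    rcases le_total 0 y with hy | hy
    · have := key 0 y hy; linarith
    · have := key y 0 hy
      rw [intervalIntegral.integral_symm] at this
      linarith
  rw [keyall]
  exact (intervalIntegral.integral_hasDerivAt_right
    (hcont.intervalIntegrable 0 x)
    (hcont.stronglyMeasurableAtFilter volume (𝓝 x)) hcont.continuousAt).const_sub _

lemma uGamma_nonneg (r : ℕ) {x : ℝ} (hx : 0 ≤ x) : 0 ≤ uGamma r x :=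
  MeasureTheory.setIntegral_nonneg measurableSet_Ioi fun t ht =>
    mul_nonneg (pow_nonneg (hx.trans (le_of_lt ht)) _) (Real.exp_nonneg _)

lemma uGamma_continuous (r : ℕ) : Continuous (uGamma r) :=
  continuous_iff_continuousAt.mpr fun x =>
    (uGamma_hasDerivAt r x).differentiableAt.continuousAt

set_option maxHeartbeats 1000000 in
/-- If `y_k` solves `(Γ_k(-ln y_k))' = k!(1 - 1/(kθ_k)) - Γ_{k+1}(-ln y_k)` on `(0,1)` with
`y_k(0)=1` and `y_k(t) → 0` as `t → 1⁻`, `y_k` strictly decreasing, then `θ_k` satisfies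
`∫_0^1 (-ln y)^{k-1} / (k!/(kθ_k) - k! + Γ_{k+1}(-ln y)) dy = 1`. -/
theorem stmt11 (k : ℕ) (hk : 1 ≤ k) (θ : ℝ) (hθ : θ ∈ Set.Ioo (0 : ℝ) (1 / k))
    (yk : ℝ → ℝ)
    (hyval : ∀ t ∈ Set.Ico (0 : ℝ) 1, yk t ∈ Set.Ioc (0 : ℝ) 1)
    (hydiff : ∀ t ∈ Set.Ico (0 : ℝ) 1, DifferentiableAt ℝ yk t)
    (hanti : StrictAntiOn yk (Set.Ico 0 1))
    (hy0 : yk 0 = 1)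
    (hy1 : Filter.Tendsto yk (nhdsWithin 1 (Set.Iio 1)) (nhds 0))
    (hode : ∀ t ∈ Set.Ioo (0 : ℝ) 1,
      deriv (fun s => uGamma k (-Real.log (yk s))) t
        = (Nat.factorial k : ℝ) * (1 - 1 / (k * θ)) - uGamma (k + 1) (-Real.log (yk t))) :
    ∫ y in (0 : ℝ)..1,
        (-Real.log y) ^ (k - 1) /
          ((Nat.factorial k : ℝ) / (k * θ) - (Nat.factorial k : ℝ)
            + uGamma (k + 1) (-Real.log y)) = 1 := by
  obtain ⟨hθ0, hθ1⟩ := hθ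
  have hkR : (0:ℝ) < k := by exact_mod_cast Nat.pos_of_ne_zero (by omega)
  have hkθ : 0 < (k:ℝ) * θ := mul_pos hkR hθ0
  have hkθ1 : (k:ℝ) * θ < 1 := by
    have := (mul_lt_mul_of_pos_left hθ1 hkR)
    rwa [mul_one_div, div_self hkR.ne'] at this
  have hfacpos : (0:ℝ) < (Nat.factorial k : ℝ) := by exact_mod_cast Nat.factorial_pos k
  set c : ℝ := (Nat.factorial k : ℝ) / (↑k * θ) - (Nat.factorial k : ℝ) with hc_def
  have hc : 0 < c := by
    rw [hc_def, sub_pos]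
    rw [lt_div_iff₀ hkθ]
    nlinarith
  set F : ℝ → ℝ := fun y => c + uGamma (k+1) (-Real.log y) with hF_def
  set h : ℝ → ℝ := fun y => (-Real.log y) ^ (k - 1) / F y with hh_def
  show ∫ y in (0:ℝ)..1, h y = 1
  have hFpos : ∀ y ∈ Set.Ioc (0:ℝ) 1, 0 < F y := by
    intro y hy
    have hlog : 0 ≤ -Real.log y := by
      rw [neg_nonneg]; exact Real.log_nonpos hy.1.le hy.2
    exact lt_of_lt_of_le hc (le_add_of_nonneg_right (uGamma_nonneg _ hlog))
  have hlogcont : ContinuousOn (fun y : ℝ => -Real.log y) (Set.Ioc (0:ℝ) 1) :=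
    (Real.continuousOn_log.mono (fun y hy => by simp [ne_of_gt hy.1])).neg
  have hhcont : ContinuousOn h (Set.Ioc (0:ℝ) 1) := by
    apply ContinuousOn.div (hlogcont.pow _)
      (continuousOn_const.add ((uGamma_continuous (k+1)).comp_continuousOn hlogcont))
    exact fun y hy => (hFpos y hy).ne'
  -- integrability of h on Ioc 0 1
  have hInt : MeasureTheory.IntegrableOn h (Set.Ioc (0:ℝ) 1) := by
    have hmeas : MeasureTheory.AEStronglyMeasurable h (volume.restrict (Set.Ioc (0:ℝ) 1)) :=
      hhcont.aestronglyMeasurable measurableSet_Ioc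
    set ε : ℝ := 1/(2*k) with hε_def
    have hεpos : 0 < ε := by positivity
    have hbound_int : MeasureTheory.IntegrableOn
        (fun y : ℝ => ε⁻¹ ^ (k-1) * y ^ (-(1/2) : ℝ) / c) (Set.Ioc (0:ℝ) 1) := by
      apply MeasureTheory.Integrable.div_const
      apply MeasureTheory.Integrable.const_mul
      exact (intervalIntegral.intervalIntegrable_rpow' (a := 0) (b := 1)
        (r := (-(1/2):ℝ)) (by norm_num)).1
    refine MeasureTheory.Integrable.mono hbound_int hmeas ?_
    filter_upwards [MeasureTheory.ae_restrict_mem measurableSet_Ioc] with y hy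
    have hy0' : 0 < y := hy.1
    have hlognn : 0 ≤ -Real.log y := by
      rw [neg_nonneg]; exact Real.log_nonpos hy0'.le hy.2
    have hFy := hFpos y hy
    have hnum : (-Real.log y) ^ (k-1) ≤ ε⁻¹ ^ (k-1) * y ^ (-(1/2) : ℝ) := by
      have h1 : -Real.log y ≤ ε⁻¹ * y ^ (-ε) := by
        rw [show -Real.log y = Real.log y⁻¹ from (Real.log_inv y).symm]
        calc Real.log y⁻¹ ≤ (y⁻¹) ^ ε / ε :=
              Real.log_le_rpow_div (inv_nonneg.mpr hy0'.le) hεpos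
          _ = ε⁻¹ * y ^ (-ε) := by
              rw [Real.inv_rpow hy0'.le, ← Real.rpow_neg hy0'.le, div_eq_inv_mul]
      calc (-Real.log y) ^ (k-1) ≤ (ε⁻¹ * y ^ (-ε)) ^ (k-1) :=
            pow_le_pow_left₀ hlognn h1 _
        _ = ε⁻¹ ^ (k-1) * (y ^ (-ε)) ^ (k-1) := mul_pow _ _ _
        _ ≤ ε⁻¹ ^ (k-1) * y ^ (-(1/2) : ℝ) := by
            apply mul_le_mul_of_nonneg_left _ (by positivity)
            rw [← Real.rpow_natCast (y ^ (-ε)) (k-1), ← Real.rpow_mul hy0'.le]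
            apply Real.rpow_le_rpow_of_exponent_ge hy0' hy.2
            have hkcast : ((k - 1 : ℕ) : ℝ) = (k:ℝ) - 1 := by
              have := Nat.cast_sub hk (R := ℝ); simpa using this
            rw [hkcast, hε_def, neg_mul, neg_le_neg_iff, div_mul_eq_mul_div, one_mul,
              div_le_div_iff₀ (by positivity) (by norm_num : (0:ℝ) < 2)]
            nlinarith
    have hh_nonneg : 0 ≤ h y := by
      rw [hh_def]
      exact div_nonneg (pow_nonneg hlognn _) hFy.le
    rw [Real.norm_eq_abs, Real.norm_eq_abs, abs_of_nonneg hh_nonneg,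
      abs_of_nonneg (by positivity)]
    rw [hh_def]
    have hcF : c ≤ F y := le_add_of_nonneg_right (uGamma_nonneg _ hlognn)
    calc (-Real.log y) ^ (k-1) / F y ≤ ε⁻¹ ^ (k-1) * y ^ (-(1/2) : ℝ) / F y := by
          gcongr
        _ ≤ ε⁻¹ ^ (k-1) * y ^ (-(1/2) : ℝ) / c := by
          gcongr
  -- pointwise ODE consequence
  have hpt : ∀ t ∈ Set.Ioo (0:ℝ) 1, deriv yk t * h (yk t) = -1 := by
    intro t ht
    have htI : t ∈ Set.Ico (0:ℝ) 1 := ⟨ht.1.le, ht.2⟩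
    have hval := hyval t htI
    have hypos : 0 < yk t := hval.1
    have hlt1 : yk t < 1 := by
      have := hanti (Set.left_mem_Ico.mpr one_pos) htI ht.1
      rwa [hy0] at this
    set x : ℝ := -Real.log (yk t) with hx_def
    have hdyk := hydiff t htI
    have hlog : HasDerivAt (fun s => -Real.log (yk s)) (-((yk t)⁻¹ * deriv yk t)) t :=
      ((Real.hasDerivAt_log hypos.ne').comp t hdyk.hasDerivAt).neg
    have hcomp : HasDerivAt (fun s => uGamma k (-Real.log (yk s)))
        (-(x ^ (k-1) * Real.exp (-x)) * -((yk t)⁻¹ * deriv yk t)) t :=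
      by have := (uGamma_hasDerivAt k x).comp t hlog; exact this
    have hexp : Real.exp (-x) = yk t := by
      rw [hx_def, neg_neg, Real.exp_log hypos]
    have hderiv_eq : deriv (fun s => uGamma k (-Real.log (yk s))) t
        = x ^ (k-1) * deriv yk t := by
      rw [hcomp.deriv, hexp]
      field_simp
    have hodet := hode t ht
    rw [hderiv_eq] at hodet
    have hFpos' := hFpos (yk t) ⟨hypos, hval.2⟩
    have hnum : x ^ (k-1) * deriv yk t = -(F (yk t)) := by
      rw [hodet, hF_def, hc_def]
      ring
    show deriv yk t * ((-Real.log (yk t)) ^ (k - 1) / F (yk t)) = -1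
    rw [← hx_def, show deriv yk t * (x ^ (k-1) / F (yk t))
        = (x ^ (k-1) * deriv yk t) / F (yk t) from by ring, hnum, neg_div,
      div_self hFpos'.ne']
  -- substitution
  have hsub : ∀ a b : ℝ, 0 < a → a ≤ b → b < 1 → (∫ y in yk b..yk a, h y) = b - a := by
    intro a b ha hab hb1
    have hab' : Set.uIcc a b = Set.Icc a b := Set.uIcc_of_le hab
    have hsubset : Set.Icc a b ⊆ Set.Ioo (0:ℝ) 1 := fun s hs =>
      ⟨lt_of_lt_of_le ha hs.1, lt_of_le_of_lt hs.2 hb1⟩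
    have hIco : Set.Icc a b ⊆ Set.Ico (0:ℝ) 1 :=
      hsubset.trans Set.Ioo_subset_Ico_self
    have hcont_yk : ContinuousOn yk (Set.uIcc a b) := by
      rw [hab']
      exact fun s hs => (hydiff s (hIco hs)).continuousAt.continuousWithinAt
    have himage : yk '' Set.uIcc a b ⊆ Set.Ioc (0:ℝ) 1 := by
      rw [hab']
      rintro _ ⟨s, hs, rfl⟩
      exact hyval s (hIco hs)
    have heq : (∫ s in a..b, deriv yk s • (h ∘ yk) s) = ∫ y in yk a..yk b, h y := by
      apply intervalIntegral.integral_comp_smul_deriv''' hcont_yk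
      · intro s hs
        rw [min_eq_left hab, max_eq_right hab] at hs
        exact ((hydiff s (hIco (Set.Ioo_subset_Icc_self hs))).hasDerivAt).hasDerivWithinAt
      · rw [min_eq_left hab, max_eq_right hab]
        exact hhcont.mono ((Set.image_mono (f := yk) Set.Ioo_subset_Icc_self).trans
          (hab' ▸ himage))
      · exact hInt.mono_set himage
      · rw [hab']
        exact MeasureTheory.IntegrableOn.congr_fun (f := fun _ => (-1:ℝ))
          (MeasureTheory.integrableOn_const measure_Icc_lt_top.ne)
          (fun s hs => by
            simp only [Function.comp_apply, smul_eq_mul]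
            exact (hpt s (hsubset hs)).symm)
          measurableSet_Icc
    have hconst : (∫ s in a..b, deriv yk s • (h ∘ yk) s) = a - b := by
      rw [intervalIntegral.integral_congr (g := fun _ => (-1:ℝ))
        (fun s hs => by simp only [Function.comp_apply, smul_eq_mul]; exact hpt s (hsubset (hab' ▸ hs))),
        intervalIntegral.integral_const, smul_eq_mul]
      ring
    rw [intervalIntegral.integral_symm, ← heq, hconst]
    ring
  -- primitive and limits
  have hIntIcc : MeasureTheory.IntegrableOn h (Set.Icc (0:ℝ) 1) := by
    rwa [integrableOn_Icc_iff_integrableOn_Ioc]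
  have hII : ∀ u v : ℝ, u ∈ Set.Icc (0:ℝ) 1 → v ∈ Set.Icc (0:ℝ) 1 →
      IntervalIntegrable h MeasureTheory.volume u v := fun u v hu hv =>
    (hIntIcc.mono_set (Set.uIcc_subset_Icc hu hv)).intervalIntegrable
  set G : ℝ → ℝ := fun u => ∫ y in (0:ℝ)..u, h y with hG_def
  have hGcont : ContinuousOn G (Set.Icc (0:ℝ) 1) := by
    have := intervalIntegral.continuousOn_primitive_interval (f := h) (a := (0:ℝ)) (b := 1)
      (μ := MeasureTheory.volume) (by rwa [Set.uIcc_of_le zero_le_one])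
    rwa [Set.uIcc_of_le zero_le_one] at this
  have hGdiff : ∀ p q : ℝ, 0 < p → p ≤ q → q < 1 → G (yk p) - G (yk q) = q - p := by
    intro p q hp hpq hq1
    have hmema : yk p ∈ Set.Icc (0:ℝ) 1 :=
      Set.Ioc_subset_Icc_self (hyval p ⟨hp.le, lt_of_le_of_lt hpq hq1⟩)
    have hmemb : yk q ∈ Set.Icc (0:ℝ) 1 :=
      Set.Ioc_subset_Icc_self (hyval q ⟨(hp.trans_le hpq).le, hq1⟩)
    have h01 : (0:ℝ) ∈ Set.Icc (0:ℝ) 1 := by norm_num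
    rw [hG_def]
    rw [intervalIntegral.integral_interval_sub_left (hII 0 (yk p) h01 hmema)
      (hII 0 (yk q) h01 hmemb)]
    exact hsub p q hp hpq hq1
  have htend : Filter.Tendsto (fun n : ℕ => ((n:ℝ)+4)⁻¹) Filter.atTop (nhds 0) :=
    (Filter.tendsto_atTop_add_const_right _ 4 tendsto_natCast_atTop_atTop).inv_tendsto_atTop
  set av : ℕ → ℝ := fun n => ((n:ℝ)+4)⁻¹ with hav_def
  set bv : ℕ → ℝ := fun n => 1 - ((n:ℝ)+4)⁻¹ with hbv_def
  have hbound : ∀ n : ℕ, 0 < av n ∧ av n ≤ bv n ∧ bv n < 1 := by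
    intro n
    have hpos : (0:ℝ) < (n:ℝ)+4 := by positivity
    have hinv : ((n:ℝ)+4)⁻¹ ≤ (4:ℝ)⁻¹ := by
      gcongr
      exact le_add_of_nonneg_left n.cast_nonneg
    have hivp : 0 < ((n:ℝ)+4)⁻¹ := inv_pos.mpr hpos
    refine ⟨hivp, ?_, ?_⟩
    · simp only [hav_def, hbv_def]
      norm_num at hinv ⊢
      linarith
    · simp only [hbv_def]
      linarith
  have heqn : ∀ n, G (yk (av n)) - G (yk (bv n)) = bv n - av n := fun n =>
    hGdiff (av n) (bv n) (hbound n).1 (hbound n).2.1 (hbound n).2.2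
  have hR : Filter.Tendsto (fun n => bv n - av n) Filter.atTop (nhds 1) := by
    have : Filter.Tendsto (fun n : ℕ => 1 - ((n:ℝ)+4)⁻¹ - ((n:ℝ)+4)⁻¹) Filter.atTop
        (nhds (1 - 0 - 0)) := (tendsto_const_nhds.sub htend).sub htend
    simpa using this
  have hyka : Filter.Tendsto (fun n => yk (av n)) Filter.atTop (nhds 1) := by
    have hcont0 : ContinuousAt yk 0 := (hydiff 0 ⟨le_refl 0, one_pos⟩).continuousAt
    have := hcont0.tendsto.comp htend
    rwa [hy0] at this
  have hmem_a : ∀ n, yk (av n) ∈ Set.Icc (0:ℝ) 1 := fun n =>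
    Set.Ioc_subset_Icc_self (hyval _ ⟨(hbound n).1.le,
      lt_of_le_of_lt (hbound n).2.1 (hbound n).2.2⟩)
  have hGa : Filter.Tendsto (fun n => G (yk (av n))) Filter.atTop (nhds (G 1)) :=
    (hGcont 1 (by norm_num)).tendsto.comp
      (tendsto_nhdsWithin_of_tendsto_nhds_of_eventually_within _ hyka
        (Filter.Eventually.of_forall hmem_a))
  have hykb : Filter.Tendsto (fun n => yk (bv n)) Filter.atTop (nhds 0) := by
    apply hy1.comp
    apply tendsto_nhdsWithin_of_tendsto_nhds_of_eventually_within
    · have : Filter.Tendsto (fun n : ℕ => 1 - ((n:ℝ)+4)⁻¹) Filter.atTop (nhds (1 - 0)) :=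
        tendsto_const_nhds.sub htend
      simpa using this
    · exact Filter.Eventually.of_forall fun n => (hbound n).2.2
  have hmem_b : ∀ n, yk (bv n) ∈ Set.Icc (0:ℝ) 1 := fun n =>
    Set.Ioc_subset_Icc_self (hyval _ ⟨((hbound n).1.trans_le (hbound n).2.1).le,
      (hbound n).2.2⟩)
  have hGb : Filter.Tendsto (fun n => G (yk (bv n))) Filter.atTop (nhds (G 0)) :=
    (hGcont 0 (by norm_num)).tendsto.comp
      (tendsto_nhdsWithin_of_tendsto_nhds_of_eventually_within _ hykb
        (Filter.Eventually.of_forall hmem_b))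
  have hG0 : G 0 = 0 := intervalIntegral.integral_same
  have hL : Filter.Tendsto (fun n => G (yk (av n)) - G (yk (bv n))) Filter.atTop
      (nhds (G 1)) := by
    have := hGa.sub hGb
    rwa [hG0, sub_zero] at this
  have hfinal : G 1 = 1 := tendsto_nhds_unique (hL.congr heqn) hR
  exact hfinal
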